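/- Let ν be a Borel probability measure on 𝕋^d, z ∈ 𝕋^d, and ε ∈ (0, 1/4] with ν(B(z, ε)) > 0 and ν{x : dist(x, z) = ε} = 0. Let θ be the uniform probability measure on the closed Euclidean unit ball S of ℝ^d. For u ∈ ℝ set b_m = (1/d) · log(m · ν(B(z, ε)) / ε^d) and u_m = u/d + b_m. Then m · (ν ⊗ θ){(x, ξ) ∈ 𝕋^d × S : dist(x + εξ, z) < e^{−u_m}} → e^{−u} as m → ∞; in particular the linear normalizing sequence for the maximum process has scale a_m = d and location b_m = (1/d) log(m ν(B(z, ε))/ε^d). -/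

import Mathlib

open MeasureTheory Metric Set Filter Topology

noncomputable section

/-- The `d`-dimensional torus `(ℝ/ℤ)^d`. -/
abbrev Torus (d : ℕ) := Fin d → AddCircle (1 : ℝ)

/-- Translation of a torus point by a vector `w ∈ ℝ^d` (via the projection `ℝ^d → 𝕋^d`). -/
def tr {d : ℕ} (x : Torus d) (w : EuclideanSpace ℝ (Fin d)) : Torus d :=
  fun i => x i + (w i : AddCircle (1 : ℝ))

/-- The translation-invariant metric on the torus induced by the Euclidean norm on `ℝ^d`. -/
def tdist {d : ℕ} (x y : Torus d) : ℝ :=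
  Real.sqrt (∑ i, dist (x i) (y i) ^ 2)

/-- The open ball of center `p` and radius `r` in the torus, for the metric `tdist`. -/
def tball {d : ℕ} (p : Torus d) (r : ℝ) : Set (Torus d) := {y | tdist y p < r}

/-- The observable process `X_i(x, ξ̄) = -log dist(T^i x + ε ξ_i, z)`. -/
def Xobs {d : ℕ} (T : Torus d → Torus d) (z : Torus d) (ε : ℝ) (i : ℕ)
    (p : Torus d × (ℕ → EuclideanSpace ℝ (Fin d))) : ℝ :=
  - Real.log (tdist (tr (T^[i] p.1) (ε • p.2 i)) z)

/-- `Θ` is the infinite product measure `θ^{⊗ℕ}`: every finite-dimensional marginal of `Θ`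
is the corresponding finite product of copies of `θ`. -/
def IsIIDProduct {d : ℕ} (θ : Measure (EuclideanSpace ℝ (Fin d)))
    (Θ : Measure (ℕ → EuclideanSpace ℝ (Fin d))) : Prop :=
  ∀ n : ℕ, Θ.map (fun ξ (i : Fin n) => ξ i) = Measure.pi fun _ : Fin n => θ

/-- `(T, ν)` has polynomial decay of correlations with constant `C`:
for every `g ∈ L¹(ν)`, every bounded Borel `h` and every `t ≥ 1`,
`|∫ g ⬝ (h ∘ T^t) dν − (∫ g dν)(∫ h dν)| ≤ C ‖h‖_∞ ‖g‖_{L¹(ν)} t^{-2}`. -/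
def DecayCor {d : ℕ} (T : Torus d → Torus d) (ν : Measure (Torus d)) (C : ℝ) : Prop :=
  ∀ g : Torus d → ℝ, Integrable g ν →
    ∀ h : Torus d → ℝ, Measurable h → ∀ K : ℝ, (∀ x, |h x| ≤ K) →
      ∀ t : ℕ, 1 ≤ t →
        |(∫ x, g x * h (T^[t] x) ∂ν) - (∫ x, g x ∂ν) * ∫ x, h x ∂ν| ≤
          C * K * (∫ x, |g x| ∂ν) / (t : ℝ) ^ 2

/-- The uniform probability measure on the closed Euclidean unit ball of `ℝ^d`. -/
def unifBall (d : ℕ) : Measure (EuclideanSpace ℝ (Fin d)) :=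
  (volume (Metric.closedBall (0 : EuclideanSpace ℝ (Fin d)) 1))⁻¹ •
    volume.restrict (Metric.closedBall 0 1)

namespace Statement6Aux

variable {d : ℕ}

/-- The coordinatewise-distance vector, as an element of Euclidean space. -/
def dvec (x z : Torus d) : EuclideanSpace ℝ (Fin d) := WithLp.toLp 2 (fun i => dist (x i) (z i))

/-- The coordinatewise absolute value, as an element of Euclidean space. -/
def avec (w : EuclideanSpace ℝ (Fin d)) : EuclideanSpace ℝ (Fin d) := WithLp.toLp 2 (fun i => |w i|)

lemma abs_coord_le_norm (ξ : EuclideanSpace ℝ (Fin d)) (i : Fin d) : |ξ i| ≤ ‖ξ‖ := by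
  rw [EuclideanSpace.norm_eq, ← Real.sqrt_sq_eq_abs]
  apply Real.sqrt_le_sqrt
  have h1 : ‖ξ i‖^2 ≤ ∑ j, ‖ξ j‖^2 :=
    Finset.single_le_sum (f := fun j => ‖ξ j‖^2) (fun j _ => sq_nonneg _) (Finset.mem_univ i)
  simpa [Real.norm_eq_abs, sq_abs] using h1

lemma continuous_tdist (z : Torus d) : Continuous fun x : Torus d => tdist x z :=
  (continuous_finset_sum _ fun i _ => ((continuous_apply i).dist continuous_const).pow 2).sqrt

lemma tdist_nonneg (x z : Torus d) : 0 ≤ tdist x z := Real.sqrt_nonneg _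

lemma tdist_self (z : Torus d) : tdist z z = 0 := by
  simp [tdist]

lemma tdist_eq_norm (x z : Torus d) : tdist x z = ‖dvec x z‖ := by
  rw [EuclideanSpace.norm_eq]
  unfold tdist
  congr 1
  refine Finset.sum_congr rfl fun i _ => ?_
  rw [Real.norm_eq_abs, show dvec x z i = dist (x i) (z i) from rfl,
    abs_of_nonneg dist_nonneg]

lemma coord_dist_le_tdist (x z : Torus d) (i : Fin d) : dist (x i) (z i) ≤ tdist x z := by
  rw [tdist_eq_norm]
  calc dist (x i) (z i) ≤ |dist (x i) (z i)| := le_abs_self _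
  _ = |dvec x z i| := rfl
  _ ≤ _ := abs_coord_le_norm (dvec x z) i

lemma norm_le_norm_of_abs_le {a b : EuclideanSpace ℝ (Fin d)} (h : ∀ i, |a i| ≤ |b i|) :
    ‖a‖ ≤ ‖b‖ := by
  rw [EuclideanSpace.norm_eq, EuclideanSpace.norm_eq]
  apply Real.sqrt_le_sqrt
  refine Finset.sum_le_sum fun i _ => ?_
  rw [Real.norm_eq_abs, Real.norm_eq_abs]
  exact pow_le_pow_left₀ (abs_nonneg _) (h i) 2

lemma norm_avec (w : EuclideanSpace ℝ (Fin d)) : ‖avec w‖ = ‖w‖ := by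
  rw [EuclideanSpace.norm_eq, EuclideanSpace.norm_eq]
  congr 1
  refine Finset.sum_congr rfl fun i _ => ?_
  rw [Real.norm_eq_abs, Real.norm_eq_abs, show avec w i = |w i| from rfl, abs_abs]

lemma norm_coe_addCircle_le (t : ℝ) : ‖(t : AddCircle (1:ℝ))‖ ≤ |t| := by
  rcases le_or_gt |t| (1/2) with h | h
  · exact le_of_eq ((AddCircle.norm_coe_eq_abs_iff (p := (1:ℝ)) one_ne_zero).2 (by simpa using h))
  · calc ‖(t : AddCircle (1:ℝ))‖ ≤ |(1:ℝ)| / 2 :=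
        AddCircle.norm_le_half_period (p := (1:ℝ)) one_ne_zero
      _ ≤ |t| := by rw [abs_one]; linarith

lemma tr_tr (x : Torus d) (w v : EuclideanSpace ℝ (Fin d)) :
    tr (tr x w) v = tr x (w + v) := by
  funext i
  show x i + (w i : AddCircle (1:ℝ)) + (v i : AddCircle (1:ℝ))
      = x i + ((w + v) i : AddCircle (1:ℝ))
  rw [show ((w + v) i : ℝ) = w i + v i from rfl, AddCircle.coe_add, add_assoc]

lemma tr_zero (x : Torus d) : tr x 0 = x := by
  funext i
  show x i + (((0 : EuclideanSpace ℝ (Fin d)) i : ℝ) : AddCircle (1:ℝ)) = x i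
  rw [show ((0 : EuclideanSpace ℝ (Fin d)) i : ℝ) = 0 from rfl]
  simp

lemma tdist_tr_le (x z : Torus d) (w : EuclideanSpace ℝ (Fin d)) :
    tdist (tr x w) z ≤ tdist x z + ‖w‖ := by
  have key : tdist (tr x w) z ≤ ‖dvec x z + avec w‖ := by
    rw [tdist_eq_norm]
    apply norm_le_norm_of_abs_le
    intro i
    have h2 : dist (x i + (w i : AddCircle (1:ℝ))) (z i) ≤
        dist (x i + (w i : AddCircle (1:ℝ))) (x i) + dist (x i) (z i) := dist_triangle _ _ _
    have h3 : dist (x i + (w i : AddCircle (1:ℝ))) (x i) ≤ |w i| := by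
      rw [dist_eq_norm, add_sub_cancel_left]
      exact norm_coe_addCircle_le _
    have hsum : (dvec x z + avec w) i = dist (x i) (z i) + |w i| := rfl
    rw [show dvec (tr x w) z i = dist (tr x w i) (z i) from rfl,
      abs_of_nonneg dist_nonneg, hsum, abs_of_nonneg (by positivity)]
    calc dist (tr x w i) (z i) = dist (x i + (w i : AddCircle (1:ℝ))) (z i) := rfl
      _ ≤ _ := h2
      _ ≤ _ := by linarith
  calc tdist (tr x w) z ≤ ‖dvec x z + avec w‖ := key
    _ ≤ ‖dvec x z‖ + ‖avec w‖ := norm_add_le _ _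
    _ = tdist x z + ‖w‖ := by rw [← tdist_eq_norm, norm_avec]

lemma tdist_le_tdist_tr (x z : Torus d) (w : EuclideanSpace ℝ (Fin d)) :
    tdist x z ≤ tdist (tr x w) z + ‖w‖ := by
  have h := tdist_tr_le (tr x w) z (-w)
  rw [tr_tr, add_neg_cancel, tr_zero, norm_neg] at h
  exact h

/-- A coordinatewise minimal-norm lift of `z - x`. -/
lemma exists_lift (x z : Torus d) :
    ∃ c : EuclideanSpace ℝ (Fin d),
      (∀ i, x i + (c i : AddCircle (1:ℝ)) = z i) ∧
      (∀ i, |c i| = dist (x i) (z i)) ∧ (∀ i, |c i| ≤ 1/2) := by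
  have H : ∀ i, ∃ t : ℝ, x i + (t : AddCircle (1:ℝ)) = z i ∧
      |t| = dist (x i) (z i) ∧ |t| ≤ 1/2 := by
    intro i
    obtain ⟨s, hs⟩ := QuotientAddGroup.mk_surjective (z i - x i)
    have hz : ((round s : ℝ) : AddCircle (1:ℝ)) = 0 := by
      rw [AddCircle.coe_eq_zero_iff]; exact ⟨round s, by simp⟩
    have hcoe : ((s - (round s : ℝ) : ℝ) : AddCircle (1:ℝ)) = z i - x i := by
      rw [AddCircle.coe_sub, hz, sub_zero]
      exact hs
    have hn : ‖((s - (round s : ℝ) : ℝ) : AddCircle (1:ℝ))‖ = |s - (round s : ℝ)| := by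
      rw [AddCircle.norm_coe_eq_abs_iff (p := (1:ℝ)) one_ne_zero]
      simpa using abs_sub_round s
    refine ⟨s - round s, ?_, ?_, by simpa using abs_sub_round s⟩
    · rw [hcoe]; abel
    · rw [← hn, hcoe, dist_eq_norm']
  choose c h1 h2 h3 using H
  exact ⟨WithLp.toLp 2 c, h1, h2, h3⟩

lemma norm_lift {x z : Torus d} {c : EuclideanSpace ℝ (Fin d)}
    (hc2 : ∀ i, |c i| = dist (x i) (z i)) : ‖c‖ = tdist x z := by
  rw [tdist_eq_norm]
  apply le_antisymm
  · apply norm_le_norm_of_abs_le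
    intro i
    rw [hc2 i, show dvec x z i = dist (x i) (z i) from rfl, abs_of_nonneg dist_nonneg]
  · apply norm_le_norm_of_abs_le
    intro i
    rw [hc2 i, show dvec x z i = dist (x i) (z i) from rfl, abs_of_nonneg dist_nonneg]

/-- Upper inclusion: the slice is contained in a small ball. -/
lemma slice_subset {ε : ℝ} (hε0 : 0 < ε) (hε : ε ≤ 1/4) {r : ℝ} (hr4 : r < 1/4)
    (x z : Torus d) (c : EuclideanSpace ℝ (Fin d))
    (hc1 : ∀ i, x i + (c i : AddCircle (1:ℝ)) = z i)
    (hc3 : ∀ i, |c i| ≤ 1/2)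
    (ξ : EuclideanSpace ℝ (Fin d)) (hξ1 : ξ ∈ Metric.closedBall (0 : EuclideanSpace ℝ (Fin d)) 1)
    (hξ2 : tdist (tr x (ε • ξ)) z < r) :
    ξ ∈ Metric.ball (ε⁻¹ • c) (r / ε) := by
  have hξn : ‖ξ‖ ≤ 1 := by simpa [Metric.mem_closedBall, dist_zero_right] using hξ1
  have key : ∀ i, dist (tr x (ε • ξ) i) (z i) = |ε * ξ i - c i| := by
    intro i
    have heq : dist (tr x (ε • ξ) i) (z i) = ‖((ε * ξ i - c i : ℝ) : AddCircle (1:ℝ))‖ := by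
      have h4 : tr x (ε • ξ) i = z i + ((ε * ξ i - c i : ℝ) : AddCircle (1:ℝ)) := by
        show x i + (((ε • ξ) i : ℝ) : AddCircle (1:ℝ))
            = z i + ((ε * ξ i - c i : ℝ) : AddCircle (1:ℝ))
        rw [show ((ε • ξ) i : ℝ) = ε * ξ i from rfl, AddCircle.coe_sub, ← hc1 i]
        abel
      rw [h4, dist_eq_norm, add_sub_cancel_left]
    have habs : |ε * ξ i - c i| ≤ 3/4 := by
      have h1 : |ξ i| ≤ 1 := le_trans (abs_coord_le_norm ξ i) hξn
      have h2 : |c i| ≤ 1/2 := hc3 i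
      have h5 : |ε * ξ i - c i| ≤ |ε * ξ i| + |c i| := abs_sub _ _
      have h3 : |ε * ξ i| ≤ ε := by
        rw [abs_mul, abs_of_pos hε0]
        nlinarith
      linarith
    have hlt : ‖((ε * ξ i - c i : ℝ) : AddCircle (1:ℝ))‖ < r := by
      rw [← heq]
      exact lt_of_le_of_lt (coord_dist_le_tdist _ _ i) hξ2
    set t : ℝ := ε * ξ i - c i with ht
    have hnorm : ‖(t : AddCircle (1:ℝ))‖ = |t - round t| := by
      simpa using AddCircle.norm_eq (p := (1:ℝ)) (x := t)
    have hround : round t = 0 := by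
      by_contra hne
      have h1 : (1:ℝ) ≤ |(round t : ℝ)| := by
        rw [← Int.cast_abs]
        exact_mod_cast Int.one_le_abs (by simpa using hne)
      have h2 : |t - round t| < r := by rw [← hnorm]; exact hlt
      have h3 : |(round t : ℝ)| ≤ |t - round t| + |t| := by
        calc |(round t : ℝ)| = |t - (round t : ℝ) - t| := by
              rw [show t - (round t : ℝ) - t = -(round t : ℝ) by ring, abs_neg]
          _ ≤ _ := abs_sub _ _
      linarith
    rw [heq, hnorm, hround]
    simp
  have hfin : ‖ε • ξ - c‖ = tdist (tr x (ε • ξ)) z := by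
    rw [tdist_eq_norm, EuclideanSpace.norm_eq, EuclideanSpace.norm_eq]
    congr 1
    refine Finset.sum_congr rfl fun i _ => ?_
    rw [Real.norm_eq_abs, Real.norm_eq_abs,
      show dvec (tr x (ε • ξ)) z i = dist (tr x (ε • ξ) i) (z i) from rfl,
      abs_of_nonneg dist_nonneg, key i, show (ε • ξ - c) i = ε * ξ i - c i from rfl]
  rw [Metric.mem_ball, dist_eq_norm]
  have h6 : ξ - ε⁻¹ • c = ε⁻¹ • (ε • ξ - c) := by
    rw [smul_sub, smul_smul, inv_mul_cancel₀ hε0.ne', one_smul]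
  rw [h6, norm_smul, Real.norm_eq_abs, abs_of_pos (inv_pos.2 hε0), div_eq_inv_mul]
  apply mul_lt_mul_of_pos_left _ (inv_pos.2 hε0)
  rw [hfin]
  exact hξ2

/-- Lower inclusion: a small ball is contained in the slice. -/
lemma ball_subset_slice {ε : ℝ} (hε0 : 0 < ε) {r : ℝ} (hr0 : 0 < r)
    (x z : Torus d) (c : EuclideanSpace ℝ (Fin d))
    (hc1 : ∀ i, x i + (c i : AddCircle (1:ℝ)) = z i)
    (hc2 : ∀ i, |c i| = dist (x i) (z i))
    (hx : tdist x z < ε - r)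
    (ξ : EuclideanSpace ℝ (Fin d)) (hξ : ξ ∈ Metric.ball (ε⁻¹ • c) (r / ε)) :
    ξ ∈ Metric.closedBall (0 : EuclideanSpace ℝ (Fin d)) 1 ∧ tdist (tr x (ε • ξ)) z < r := by
  have hc : ‖c‖ = tdist x z := norm_lift hc2
  rw [Metric.mem_ball, dist_eq_norm] at hξ
  have hsc : ‖ε • ξ - c‖ < r := by
    have h1 : ε • ξ - c = ε • (ξ - ε⁻¹ • c) := by
      rw [smul_sub, smul_smul, mul_inv_cancel₀ hε0.ne', one_smul]
    rw [h1, norm_smul, Real.norm_eq_abs, abs_of_pos hε0]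
    calc ε * ‖ξ - ε⁻¹ • c‖ < ε * (r / ε) := mul_lt_mul_of_pos_left hξ hε0
      _ = r := by field_simp
  constructor
  · rw [Metric.mem_closedBall, dist_zero_right]
    have h1 : ‖ξ‖ ≤ ‖ξ - ε⁻¹ • c‖ + ‖ε⁻¹ • c‖ := by
      calc ‖ξ‖ = ‖(ξ - ε⁻¹ • c) + ε⁻¹ • c‖ := by congr 1; abel
        _ ≤ _ := norm_add_le _ _
    have h2 : ‖ε⁻¹ • c‖ = ε⁻¹ * tdist x z := by
      rw [norm_smul, Real.norm_eq_abs, abs_of_pos (inv_pos.2 hε0), hc]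
    have h3 : ε⁻¹ * tdist x z < ε⁻¹ * (ε - r) :=
      mul_lt_mul_of_pos_left hx (inv_pos.2 hε0)
    have h4 : ‖ξ - ε⁻¹ • c‖ < r / ε := hξ
    have h5 : r / ε = ε⁻¹ * r := by rw [div_eq_inv_mul]
    have h6 : ε⁻¹ * (ε - r) + ε⁻¹ * r = 1 := by field_simp; ring
    linarith
  · have hz : tr x (ε • ξ) = tr z (ε • ξ - c) := by
      funext i
      show x i + (((ε • ξ) i : ℝ) : AddCircle (1:ℝ))
          = z i + (((ε • ξ - c) i : ℝ) : AddCircle (1:ℝ))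
      rw [show ((ε • ξ - c) i : ℝ) = (ε • ξ) i - c i from rfl, AddCircle.coe_sub, ← hc1 i]
      abel
    rw [hz]
    calc tdist (tr z (ε • ξ - c)) z ≤ tdist z z + ‖ε • ξ - c‖ := tdist_tr_le _ _ _
      _ = ‖ε • ξ - c‖ := by rw [tdist_self, zero_add]
      _ < r := hsc

end Statement6Aux
instance unifBall_prob (d : ℕ) : MeasureTheory.IsProbabilityMeasure (unifBall d) := by
  constructor
  rw [unifBall, Measure.smul_apply, Measure.restrict_apply MeasurableSet.univ, Set.univ_inter,
    smul_eq_mul, ENNReal.inv_mul_cancel (measure_closedBall_pos _ _ one_pos).ne'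
      measure_closedBall_lt_top.ne]

namespace Statement6Aux

variable {d : ℕ}

lemma nontrivial_euclidean (hd : 1 ≤ d) : Nontrivial (EuclideanSpace ℝ (Fin d)) := by
  refine ⟨EuclideanSpace.single (⟨0, by omega⟩ : Fin d) (1:ℝ), 0, fun h => ?_⟩
  have h2 := congrArg (fun v : EuclideanSpace ℝ (Fin d) => ‖v‖) h
  simp [EuclideanSpace.norm_single] at h2

lemma unifBall_inv_vol_ball (hd : 1 ≤ d) {ρ : ℝ} (hρ : 0 ≤ ρ) :
    (volume (Metric.closedBall (0 : EuclideanSpace ℝ (Fin d)) 1))⁻¹ *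
      volume (Metric.ball (c : EuclideanSpace ℝ (Fin d)) ρ) = ENNReal.ofReal (ρ ^ d) := by
  have := nontrivial_euclidean hd
  rw [Measure.addHaar_ball volume c hρ, finrank_euclideanSpace_fin,
    ← Measure.addHaar_closedBall_eq_addHaar_ball volume (0 : EuclideanSpace ℝ (Fin d)) 1,
    ← mul_assoc, mul_comm ((volume (Metric.closedBall (0 : EuclideanSpace ℝ (Fin d)) 1))⁻¹) _,
    mul_assoc, ENNReal.inv_mul_cancel (measure_closedBall_pos _ _ one_pos).ne'
      measure_closedBall_lt_top.ne, mul_one]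

lemma unifBall_le_of_subset (hd : 1 ≤ d) {s : Set (EuclideanSpace ℝ (Fin d))}
    (hs : MeasurableSet s) {c : EuclideanSpace ℝ (Fin d)} {ρ : ℝ} (hρ : 0 ≤ ρ)
    (h : s ∩ Metric.closedBall 0 1 ⊆ Metric.ball c ρ) :
    unifBall d s ≤ ENNReal.ofReal (ρ ^ d) := by
  have h1 : unifBall d s =
      (volume (Metric.closedBall (0 : EuclideanSpace ℝ (Fin d)) 1))⁻¹ *
        volume (s ∩ Metric.closedBall 0 1) := by
    rw [unifBall, Measure.smul_apply, Measure.restrict_apply hs, smul_eq_mul]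
  rw [h1, ← unifBall_inv_vol_ball (c := c) hd hρ]
  exact mul_le_mul_right (measure_mono h) _

lemma le_unifBall_of_subset (hd : 1 ≤ d) {s : Set (EuclideanSpace ℝ (Fin d))}
    (hs : MeasurableSet s) {c : EuclideanSpace ℝ (Fin d)} {ρ : ℝ} (hρ : 0 ≤ ρ)
    (h : Metric.ball c ρ ⊆ s ∩ Metric.closedBall 0 1) :
    ENNReal.ofReal (ρ ^ d) ≤ unifBall d s := by
  have h1 : unifBall d s =
      (volume (Metric.closedBall (0 : EuclideanSpace ℝ (Fin d)) 1))⁻¹ *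
        volume (s ∩ Metric.closedBall 0 1) := by
    rw [unifBall, Measure.smul_apply, Measure.restrict_apply hs, smul_eq_mul]
  rw [h1, ← unifBall_inv_vol_ball (c := c) hd hρ]
  exact mul_le_mul_right (measure_mono h) _

lemma isOpen_slice (z : Torus d) (ε r : ℝ) (x : Torus d) :
    IsOpen {ξ : EuclideanSpace ℝ (Fin d) | tdist (tr x (ε • ξ)) z < r} := by
  have hcont : Continuous fun ξ : EuclideanSpace ℝ (Fin d) => tdist (tr x (ε • ξ)) z := by
    apply (continuous_tdist z).comp
    apply continuous_pi
    intro i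
    apply Continuous.add continuous_const
    exact (AddCircle.continuous_mk' (1:ℝ)).comp
      ((EuclideanSpace.proj i).continuous.comp (continuous_const_smul ε))
  exact isOpen_lt hcont continuous_const

lemma isOpen_A (z : Torus d) (ε r : ℝ) :
    IsOpen {p : Torus d × EuclideanSpace ℝ (Fin d) | tdist (tr p.1 (ε • p.2)) z < r} := by
  have hcont : Continuous fun p : Torus d × EuclideanSpace ℝ (Fin d) =>
      tdist (tr p.1 (ε • p.2)) z := by
    apply (continuous_tdist z).comp
    apply continuous_pi
    intro i
    apply Continuous.add ((continuous_apply i).comp continuous_fst)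
    exact (AddCircle.continuous_mk' (1:ℝ)).comp
      ((EuclideanSpace.proj i).continuous.comp ((continuous_const_smul ε).comp continuous_snd))
  exact isOpen_lt hcont continuous_const

lemma isOpen_tball (z : Torus d) (s : ℝ) : IsOpen (tball z s) :=
  isOpen_lt (continuous_tdist z) continuous_const

/-- Main measure estimate. -/
lemma prod_bounds (hd : 1 ≤ d) (ν : Measure (Torus d)) [IsProbabilityMeasure ν]
    (z : Torus d) {ε : ℝ} (hε0 : 0 < ε) (hε : ε ≤ 1/4) {r : ℝ} (hr0 : 0 < r) (hr4 : r < 1/4) :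
    ENNReal.ofReal ((r/ε) ^ d) * ν (tball z (ε - r)) ≤
      (ν.prod (unifBall d)) {p : Torus d × EuclideanSpace ℝ (Fin d) |
        tdist (tr p.1 (ε • p.2)) z < r} ∧
    (ν.prod (unifBall d)) {p : Torus d × EuclideanSpace ℝ (Fin d) |
        tdist (tr p.1 (ε • p.2)) z < r} ≤
      ENNReal.ofReal ((r/ε) ^ d) * ν (tball z (ε + r)) := by
  set A : Set (Torus d × EuclideanSpace ℝ (Fin d)) :=
    {p | tdist (tr p.1 (ε • p.2)) z < r} with hA
  have hAm : MeasurableSet A := (isOpen_A z ε r).measurableSet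
  have hprod : (ν.prod (unifBall d)) A = ∫⁻ x, unifBall d (Prod.mk x ⁻¹' A) ∂ν :=
    Measure.prod_apply hAm
  have hslice_meas : ∀ x : Torus d, MeasurableSet (Prod.mk x ⁻¹' A) := fun x =>
    (isOpen_slice z ε r x).measurableSet
  have hρ : (0:ℝ) ≤ r / ε := le_of_lt (div_pos hr0 hε0)
  constructor
  · rw [hprod]
    calc ENNReal.ofReal ((r/ε) ^ d) * ν (tball z (ε - r))
        = ∫⁻ x, (tball z (ε - r)).indicator (fun _ => ENNReal.ofReal ((r/ε) ^ d)) x ∂ν := by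
          rw [lintegral_indicator_const (isOpen_tball z (ε - r)).measurableSet]
      _ ≤ ∫⁻ x, unifBall d (Prod.mk x ⁻¹' A) ∂ν := by
          apply lintegral_mono
          intro x
          by_cases hx : x ∈ tball z (ε - r)
          · rw [Set.indicator_of_mem hx]
            obtain ⟨c, hc1, hc2, hc3⟩ := exists_lift x z
            apply le_unifBall_of_subset hd (hslice_meas x) hρ
            intro ξ hξ
            have hres := ball_subset_slice hε0 hr0 x z c hc1 hc2 hx ξ hξ
            exact ⟨hres.2, hres.1⟩
          · rw [Set.indicator_of_notMem hx]
            exact zero_le'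
  · rw [hprod]
    calc ∫⁻ x, unifBall d (Prod.mk x ⁻¹' A) ∂ν
        ≤ ∫⁻ x, (tball z (ε + r)).indicator (fun _ => ENNReal.ofReal ((r/ε) ^ d)) x ∂ν := by
          apply lintegral_mono
          intro x
          by_cases hx : x ∈ tball z (ε + r)
          · rw [Set.indicator_of_mem hx]
            obtain ⟨c, hc1, hc2, hc3⟩ := exists_lift x z
            apply unifBall_le_of_subset hd (hslice_meas x) hρ
            rintro ξ ⟨hξ1, hξ2⟩
            exact slice_subset hε0 hε hr4 x z c hc1 hc3 ξ hξ2 hξ1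
          · rw [Set.indicator_of_notMem hx]
            have hempty : Prod.mk x ⁻¹' A ∩ Metric.closedBall 0 1 = ∅ := by
              ext ξ
              simp only [Set.mem_inter_iff, Set.mem_preimage, Set.mem_empty_iff_false,
                iff_false, not_and]
              intro hξ1 hξ2
              apply hx
              have hmem : tdist (tr x (ε • ξ)) z < r := hξ1
              have h1 : tdist x z ≤ tdist (tr x (ε • ξ)) z + ‖ε • ξ‖ := tdist_le_tdist_tr x z _
              have h2 : ‖ε • ξ‖ ≤ ε := by
                rw [norm_smul, Real.norm_eq_abs, abs_of_pos hε0]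
                have h7 : ‖ξ‖ ≤ 1 := by
                  simpa [Metric.mem_closedBall, dist_zero_right] using hξ2
                nlinarith
              show tdist x z < ε + r
              linarith
            have hzero : unifBall d (Prod.mk x ⁻¹' A) = 0 := by
              rw [unifBall, Measure.smul_apply, Measure.restrict_apply (hslice_meas x),
                hempty, measure_empty, smul_eq_mul, mul_zero]
            exact hzero.le
      _ = ENNReal.ofReal ((r/ε) ^ d) * ν (tball z (ε + r)) := by
          rw [lintegral_indicator_const (isOpen_tball z (ε + r)).measurableSet]

lemma tball_mono (z : Torus d) {s t : ℝ} (h : s ≤ t) : tball z s ⊆ tball z t :=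
  fun y hy => lt_of_lt_of_le hy h

lemma measure_tball_tendsto (ν : Measure (Torus d)) [IsProbabilityMeasure ν]
    (z : Torus d) {ε : ℝ}
    (hbd : ν {x | tdist x z = ε} = 0)
    {s : ℕ → ℝ} (hs : Tendsto s atTop (𝓝 ε)) :
    Tendsto (fun m => (ν (tball z (s m))).toReal) atTop (𝓝 (ν (tball z ε)).toReal) := by
  set L := (ν (tball z ε)).toReal with hL
  have hmono : ∀ {a b : ℝ}, a ≤ b → (ν (tball z a)).toReal ≤ (ν (tball z b)).toReal :=
    fun hab => ENNReal.toReal_mono (measure_ne_top ν _) (measure_mono (tball_mono z hab))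
  have honediv : ∀ a b : ℕ, a ≤ b → (1:ℝ)/((b:ℝ)+1) ≤ 1/((a:ℝ)+1) := by
    intro a b hab
    have hcast : (a:ℝ) ≤ b := Nat.cast_le.2 hab
    apply one_div_le_one_div_of_le (by positivity)
    linarith
  have hUnion : (⋃ n : ℕ, tball z (ε - 1/(n+1))) = tball z ε := by
    ext y
    simp only [Set.mem_iUnion, tball, Set.mem_setOf_eq]
    constructor
    · rintro ⟨n, hn⟩
      have hp : (0:ℝ) < 1/((n:ℝ)+1) := by positivity
      linarith
    · intro hy
      obtain ⟨n, hn⟩ := exists_nat_one_div_lt (show (0:ℝ) < ε - tdist y z by linarith)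
      exact ⟨n, by linarith⟩
  have hlow : Tendsto (fun n : ℕ => (ν (tball z (ε - 1/(n+1)))).toReal) atTop (𝓝 L) := by
    have hm : Monotone fun n : ℕ => tball z (ε - 1/(n+1)) := by
      intro a b hab
      apply tball_mono
      have := honediv a b hab
      linarith
    have ht := tendsto_measure_iUnion_atTop (μ := ν) hm
    rw [hUnion] at ht
    exact (ENNReal.tendsto_toReal (measure_ne_top ν _)).comp ht
  have hInter : (⋂ n : ℕ, tball z (ε + 1/(n+1))) = {y | tdist y z ≤ ε} := by
    ext y
    simp only [Set.mem_iInter, tball, Set.mem_setOf_eq]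
    constructor
    · intro h
      by_contra hlt
      push_neg at hlt
      obtain ⟨n, hn⟩ := exists_nat_one_div_lt (show (0:ℝ) < tdist y z - ε by linarith)
      have h8 := h n
      linarith
    · intro h n
      have hp : (0:ℝ) < 1/((n:ℝ)+1) := by positivity
      linarith
  have hclosed : ν {y | tdist y z ≤ ε} = ν (tball z ε) := by
    apply le_antisymm
    · have hsub : {y : Torus d | tdist y z ≤ ε} ⊆ tball z ε ∪ {x | tdist x z = ε} := by
        intro y hy
        have hy' : tdist y z ≤ ε := hy
        rcases lt_or_eq_of_le hy' with h | h
        · exact Or.inl h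
        · exact Or.inr h
      calc ν {y | tdist y z ≤ ε} ≤ ν (tball z ε ∪ {x | tdist x z = ε}) := measure_mono hsub
        _ ≤ ν (tball z ε) + ν {x | tdist x z = ε} := measure_union_le _ _
        _ = ν (tball z ε) := by rw [hbd, add_zero]
    · exact measure_mono fun y hy => le_of_lt (show tdist y z < ε from hy)
  have hhigh : Tendsto (fun n : ℕ => (ν (tball z (ε + 1/(n+1)))).toReal) atTop (𝓝 L) := by
    have hm : Antitone fun n : ℕ => tball z (ε + 1/(n+1)) := by
      intro a b hab
      apply tball_mono
      have := honediv a b hab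
      linarith
    have ht := tendsto_measure_iInter_atTop (μ := ν)
      (fun n => (isOpen_tball z _).measurableSet.nullMeasurableSet) hm
      ⟨0, measure_ne_top ν _⟩
    rw [hInter, hclosed] at ht
    exact (ENNReal.tendsto_toReal (measure_ne_top ν _)).comp ht
  rw [tendsto_order]
  constructor
  · intro a ha
    obtain ⟨n₀, hn₀⟩ := (hlow.eventually (eventually_gt_nhds ha)).exists
    have hδ : ε - 1/((n₀:ℝ)+1) < ε := by
      have hp : (0:ℝ) < 1/((n₀:ℝ)+1) := by positivity
      linarith
    filter_upwards [hs.eventually (eventually_gt_nhds hδ)] with m hm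
    exact lt_of_lt_of_le hn₀ (hmono (le_of_lt hm))
  · intro a ha
    obtain ⟨n₀, hn₀⟩ := (hhigh.eventually (eventually_lt_nhds ha)).exists
    have hδ : ε < ε + 1/((n₀:ℝ)+1) := by
      have hp : (0:ℝ) < 1/((n₀:ℝ)+1) := by positivity
      linarith
    filter_upwards [hs.eventually (eventually_lt_nhds hδ)] with m hm
    exact lt_of_le_of_lt (hmono (le_of_lt hm)) hn₀

end Statement6Aux
open Statement6Aux in
/-- On the `d`-torus, with `θ` uniform on the closed unit ball `S`,
`ε ∈ (0, 1/4]`, `ν(B(z,ε)) > 0` and `ν{dist(·,z) = ε} = 0`, setting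
`b_m = (1/d) log(m ν(B(z,ε))/ε^d)` and `u_m = u/d + b_m`, one has
`m · (ν⊗θ){dist(x+εξ, z) < e^{−u_m}} → e^{−u}`, so the normalizing sequence has
scale `a_m = d` and location `b_m`. -/
theorem statement_6 {d : ℕ} (hd : 1 ≤ d)
    (ν : Measure (Torus d)) [IsProbabilityMeasure ν]
    (z : Torus d) (ε : ℝ) (hε0 : 0 < ε) (hε : ε ≤ 1 / 4)
    (hpos : 0 < ν (tball z ε))
    (hbd : ν {x | tdist x z = ε} = 0)
    (u : ℝ) :
    Tendsto (fun m : ℕ =>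
        (m : ℝ) * ((ν.prod (unifBall d)) {p : Torus d × EuclideanSpace ℝ (Fin d) |
          tdist (tr p.1 (ε • p.2)) z <
            Real.exp (-(u / d + (1 / d) *
              Real.log ((m : ℝ) * (ν (tball z ε)).toReal / ε ^ d)))}).toReal)
      atTop (𝓝 (Real.exp (-u))) := by
  set b : ℝ := (ν (tball z ε)).toReal with hb
  have hbpos : 0 < b := ENNReal.toReal_pos hpos.ne' (measure_ne_top ν _)
  have hd0 : (0:ℝ) < d := by exact_mod_cast hd
  set r : ℕ → ℝ := fun m =>
    Real.exp (-(u / d + (1 / d) * Real.log ((m : ℝ) * b / ε ^ d))) with hrdef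
  have hr0 : ∀ m, 0 < r m := fun m => Real.exp_pos _
  have hrlim : Tendsto r atTop (𝓝 0) := by
    have hq : Tendsto (fun m : ℕ => (m : ℝ) * b / ε ^ d) atTop atTop := by
      have h1 : Tendsto (fun m : ℕ => (m : ℝ)) atTop atTop := tendsto_natCast_atTop_atTop
      have h2 : (0:ℝ) < b / ε ^ d := by positivity
      have h3 := h1.atTop_mul_const h2
      simpa [mul_div_assoc] using h3
    have hlog : Tendsto (fun m : ℕ => Real.log ((m : ℝ) * b / ε ^ d)) atTop atTop :=
      Real.tendsto_log_atTop.comp hq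
    have hexp : Tendsto (fun m : ℕ => -(u / d + (1 / d) *
        Real.log ((m : ℝ) * b / ε ^ d))) atTop atBot := by
      have h3 : Tendsto (fun m : ℕ => (1 / (d:ℝ)) *
          Real.log ((m : ℝ) * b / ε ^ d)) atTop atTop :=
        Tendsto.const_mul_atTop (by positivity) hlog
      have h4 : Tendsto (fun m : ℕ => -((1 / (d:ℝ)) *
          Real.log ((m : ℝ) * b / ε ^ d))) atTop atBot := tendsto_neg_atTop_atBot.comp h3
      have h5 := tendsto_atBot_add_const_left atTop (-(u / (d:ℝ))) h4
      apply h5.congr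
      intro m
      ring
    exact Real.tendsto_exp_atBot.comp hexp
  have hkey : ∀ m : ℕ, 1 ≤ m → (m : ℝ) * (r m / ε) ^ d = Real.exp (-u) / b := by
    intro m hm
    have hm0 : (0:ℝ) < m := by exact_mod_cast hm
    have hq0 : (0:ℝ) < (m : ℝ) * b / ε ^ d := by positivity
    have hrd : r m ^ d = Real.exp (-u) / ((m : ℝ) * b / ε ^ d) := by
      rw [hrdef]
      simp only
      rw [← Real.exp_nat_mul]
      have heq : (d:ℝ) * -(u / d + (1 / d) * Real.log ((m : ℝ) * b / ε ^ d)) =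
          -u - Real.log ((m : ℝ) * b / ε ^ d) := by
        field_simp
        ring
      rw [heq, Real.exp_sub, Real.exp_log hq0]
    have hmne : (m:ℝ) ≠ 0 := hm0.ne'
    have hbne : b ≠ 0 := hbpos.ne'
    have hεne : ε ≠ 0 := hε0.ne'
    rw [div_pow, hrd]
    field_simp
  have hev : ∀ᶠ m : ℕ in atTop,
      Real.exp (-u) / b * (ν (tball z (ε - r m))).toReal ≤
        (m : ℝ) * ((ν.prod (unifBall d)) {p : Torus d × EuclideanSpace ℝ (Fin d) |
          tdist (tr p.1 (ε • p.2)) z < r m}).toReal ∧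
      (m : ℝ) * ((ν.prod (unifBall d)) {p : Torus d × EuclideanSpace ℝ (Fin d) |
          tdist (tr p.1 (ε • p.2)) z < r m}).toReal ≤
        Real.exp (-u) / b * (ν (tball z (ε + r m))).toReal := by
    have hsmall : ∀ᶠ m : ℕ in atTop, r m < 1/4 :=
      hrlim.eventually (eventually_lt_nhds (by norm_num : (0:ℝ) < 1/4))
    filter_upwards [hsmall, eventually_ge_atTop 1] with m hm4 hm1
    obtain ⟨hlo, hhi⟩ := prod_bounds hd ν z hε0 hε (hr0 m) hm4
    have hm0 : (0:ℝ) ≤ (m:ℝ) := Nat.cast_nonneg m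
    have hρd : (0:ℝ) ≤ (r m / ε) ^ d := by positivity
    have hfin : ∀ s : ℝ, ENNReal.ofReal ((r m/ε) ^ d) * ν (tball z s) ≠ ⊤ :=
      fun s => ENNReal.mul_ne_top ENNReal.ofReal_ne_top (measure_ne_top ν _)
    constructor
    · have h1 := ENNReal.toReal_mono (ne_top_of_le_ne_top (hfin (ε + r m)) hhi) hlo
      rw [ENNReal.toReal_mul, ENNReal.toReal_ofReal hρd] at h1
      have h2 := mul_le_mul_of_nonneg_left h1 hm0
      calc Real.exp (-u) / b * (ν (tball z (ε - r m))).toReal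
          = (m : ℝ) * ((r m / ε) ^ d * (ν (tball z (ε - r m))).toReal) := by
            rw [← mul_assoc, hkey m hm1]
        _ ≤ _ := h2
    · have h1 := ENNReal.toReal_mono (hfin (ε + r m)) hhi
      rw [ENNReal.toReal_mul, ENNReal.toReal_ofReal hρd] at h1
      have h2 := mul_le_mul_of_nonneg_left h1 hm0
      calc (m : ℝ) * ((ν.prod (unifBall d)) {p : Torus d × EuclideanSpace ℝ (Fin d) |
              tdist (tr p.1 (ε • p.2)) z < r m}).toReal ≤
          (m : ℝ) * ((r m / ε) ^ d * (ν (tball z (ε + r m))).toReal) := h2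
        _ = Real.exp (-u) / b * (ν (tball z (ε + r m))).toReal := by
            rw [← mul_assoc, hkey m hm1]
  have hslow : Tendsto (fun m : ℕ => ε - r m) atTop (𝓝 ε) := by
    have h := (tendsto_const_nhds : Tendsto (fun _ : ℕ => ε) atTop (𝓝 ε)).sub hrlim
    simpa using h
  have hshigh : Tendsto (fun m : ℕ => ε + r m) atTop (𝓝 ε) := by
    have h := (tendsto_const_nhds : Tendsto (fun _ : ℕ => ε) atTop (𝓝 ε)).add hrlim
    simpa using h
  have hlowlim : Tendsto (fun m => Real.exp (-u) / b * (ν (tball z (ε - r m))).toReal)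
      atTop (𝓝 (Real.exp (-u))) := by
    have h := (measure_tball_tendsto ν z hbd hslow).const_mul (Real.exp (-u) / b)
    rw [← hb, div_mul_cancel₀ _ hbpos.ne'] at h
    exact h
  have hhighlim : Tendsto (fun m => Real.exp (-u) / b * (ν (tball z (ε + r m))).toReal)
      atTop (𝓝 (Real.exp (-u))) := by
    have h := (measure_tball_tendsto ν z hbd hshigh).const_mul (Real.exp (-u) / b)
    rw [← hb, div_mul_cancel₀ _ hbpos.ne'] at h
    exact h
  exact tendsto_of_tendsto_of_tendsto_of_le_of_le' hlowlim hhighlim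
    (hev.mono fun m h => h.1) (hev.mono fun m h => h.2)

end
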